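/- Let Q be a real polynomial of degree d₀ ≥ 2 and suppose t > 0 is a point where the d₀-th monomial of Q dominates in the strong sense that Q'(t) = d₀ c t^{d₀-1}(1 + e₁), Q''(t) = d₀(d₀-1) c t^{d₀-2}(1 + e₂), Q'''(t) = d₀(d₀-1)(d₀-2) c t^{d₀-3}(1 + e₃) with |e_i| ≤ h for some c ≠ 0 and h ≤ 1/(1000 d₀³). Then 1 − Q'(t)Q'''(t)/(Q''(t))² ≥ 1/(2(d₀−1)). -/
import Mathlib


open Polynomial

lemma stmt15_core_aux (D h e₁ e₂ e₃ : ℝ) (hD3 : 3 ≤ D) (hh0 : 0 ≤ h)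
    (hhD : h * D ≤ 1 / 9000) (hhs : h ≤ 1 / 1000)
    (hb1 : |e₁| ≤ h) (hb2 : |e₂| ≤ h) (hb3 : |e₃| ≤ h) :
    2 * (D - 2) * ((1 + e₁) * (1 + e₃)) ≤ (2 * D - 3) * (1 + e₂) ^ 2 := by
  obtain ⟨l1, u1⟩ := abs_le.mp hb1
  obtain ⟨l2, u2⟩ := abs_le.mp hb2
  obtain ⟨l3, u3⟩ := abs_le.mp hb3
  have h13 : (1 + e₁) * (1 + e₃) ≤ (1 + h) ^ 2 := by nlinarith
  have h2' : (1 - h) ^ 2 ≤ (1 + e₂) ^ 2 := by nlinarith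
  have key : 2 * (D - 2) * (1 + h) ^ 2 ≤ (2 * D - 3) * (1 - h) ^ 2 := by
    nlinarith [sq_nonneg h]
  have step1 : 2 * (D - 2) * ((1 + e₁) * (1 + e₃)) ≤ 2 * (D - 2) * (1 + h) ^ 2 :=
    mul_le_mul_of_nonneg_left h13 (by linarith)
  have step3 : (2 * D - 3) * (1 - h) ^ 2 ≤ (2 * D - 3) * (1 + e₂) ^ 2 :=
    mul_le_mul_of_nonneg_left h2' (by linarith)
  linarith

lemma stmt15_h_small (D h : ℝ) (hD3 : 3 ≤ D) (hh0 : 0 ≤ h)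
    (hhb : h * (1000 * D ^ 3) ≤ 1) : h * D ≤ 1 / 9000 ∧ h ≤ 1 / 1000 := by
  have h9D : 9 * D ≤ D ^ 3 := by
    nlinarith [mul_nonneg (mul_nonneg (by linarith : (0:ℝ) ≤ D - 3)
      (by linarith : (0:ℝ) ≤ D)) (by linarith : (0:ℝ) ≤ D + 3)]
  have hD0 : (0:ℝ) < D := by linarith
  have h1 : h * (9 * D) ≤ h * D ^ 3 := mul_le_mul_of_nonneg_left h9D hh0
  have h2 : h * D ^ 3 ≤ 1 / 1000 := by nlinarith
  constructor
  · nlinarith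
  · nlinarith [mul_le_mul_of_nonneg_left hD3 hh0]

theorem stmt15 (d₀ : ℕ) (hd₀ : 2 ≤ d₀) (Q : Polynomial ℝ) (hdeg : Q.natDegree = d₀)
    (t c h e₁ e₂ e₃ : ℝ) (ht : 0 < t) (hc : c ≠ 0)
    (hh : h ≤ 1 / (1000 * (d₀ : ℝ) ^ 3))
    (he₁ : |e₁| ≤ h) (he₂ : |e₂| ≤ h) (he₃ : |e₃| ≤ h)
    (h1 : (derivative Q).eval t = (d₀ : ℝ) * c * t ^ (d₀ - 1) * (1 + e₁))
    (h2 : (derivative (derivative Q)).eval t =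
      (d₀ : ℝ) * ((d₀ : ℝ) - 1) * c * t ^ (d₀ - 2) * (1 + e₂))
    (h3 : (derivative (derivative (derivative Q))).eval t =
      (d₀ : ℝ) * ((d₀ : ℝ) - 1) * ((d₀ : ℝ) - 2) * c * t ^ (d₀ - 3) * (1 + e₃)) :
    1 / (2 * ((d₀ : ℝ) - 1)) ≤
      1 - (derivative Q).eval t * (derivative (derivative (derivative Q))).eval t /
        ((derivative (derivative Q)).eval t) ^ 2 := by
  have hh0 : 0 ≤ h := le_trans (abs_nonneg e₁) he₁
  rcases eq_or_lt_of_le hd₀ with h2d | h3d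
  · -- d₀ = 2
    subst h2d
    rw [h1, h3]
    norm_num
  · -- d₀ ≥ 3
    have hd3 : 3 ≤ d₀ := h3d
    have hD3 : (3:ℝ) ≤ (d₀:ℝ) := by exact_mod_cast hd3
    set D : ℝ := (d₀:ℝ) with hDdef
    have hD1 : (0:ℝ) < D - 1 := by linarith
    have hD0 : (0:ℝ) < D := by linarith
    have hhb : h * (1000 * D ^ 3) ≤ 1 := by
      have hpos : (0:ℝ) < 1000 * D ^ 3 := by positivity
      calc h * (1000 * D ^ 3) ≤ (1 / (1000 * D ^ 3)) * (1000 * D ^ 3) :=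
            mul_le_mul_of_nonneg_right hh (le_of_lt hpos)
        _ = 1 := by field_simp
    obtain ⟨hhD, hhs⟩ := stmt15_h_small D h hD3 hh0 hhb
    have core := stmt15_core_aux D h e₁ e₂ e₃ hD3 hh0 hhD hhs he₁ he₂ he₃
    have l2 : -h ≤ e₂ := (abs_le.mp he₂).1
    have he2ne : (1:ℝ) + e₂ ≠ 0 := by
      have : (0:ℝ) < 1 + e₂ := by linarith
      linarith
    set P : ℝ := c * t ^ (d₀ - 2) with hPdef
    have hP2 : (0:ℝ) < P ^ 2 := by
      have : P ≠ 0 := mul_ne_zero hc (pow_ne_zero _ (ne_of_gt ht))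
      positivity
    have hpow : t ^ (d₀ - 1) * t ^ (d₀ - 3) = (t ^ (d₀ - 2)) ^ 2 := by
      rw [← pow_add, ← pow_mul]
      congr 1
      omega
    have expand : (derivative Q).eval t * (derivative (derivative (derivative Q))).eval t
        = D ^ 2 * (D - 1) * (D - 2) * ((1 + e₁) * (1 + e₃)) * P ^ 2 := by
      rw [h1, h3, hPdef]
      have heq : D * c * t ^ (d₀ - 1) * (1 + e₁) *
          (D * (D - 1) * (D - 2) * c * t ^ (d₀ - 3) * (1 + e₃))
          = D ^ 2 * (D - 1) * (D - 2) * ((1 + e₁) * (1 + e₃)) *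
            (c ^ 2 * (t ^ (d₀ - 1) * t ^ (d₀ - 3))) := by ring
      rw [heq, hpow]; ring
    have hB : (0:ℝ) < ((derivative (derivative Q)).eval t) ^ 2 := by
      rw [h2]
      have hne : D * (D - 1) * c * t ^ (d₀ - 2) * (1 + e₂) ≠ 0 := by
        apply mul_ne_zero
        apply mul_ne_zero
        apply mul_ne_zero
        apply mul_ne_zero (ne_of_gt hD0) (ne_of_gt hD1)
        · exact hc
        · exact pow_ne_zero _ (ne_of_gt ht)
        · exact he2ne
      positivity
    have expand2 : ((derivative (derivative Q)).eval t) ^ 2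
        = D ^ 2 * (D - 1) ^ 2 * (1 + e₂) ^ 2 * P ^ 2 := by
      rw [h2, hPdef]; ring
    have main : (derivative Q).eval t * (derivative (derivative (derivative Q))).eval t /
        ((derivative (derivative Q)).eval t) ^ 2 ≤ 1 - 1 / (2 * (D - 1)) := by
      rw [div_le_iff₀ hB, expand, expand2]
      have hm := mul_le_mul_of_nonneg_left core
        (by positivity : (0:ℝ) ≤ D ^ 2 * (D - 1) * P ^ 2 / 2)
      calc D ^ 2 * (D - 1) * (D - 2) * ((1 + e₁) * (1 + e₃)) * P ^ 2
          = D ^ 2 * (D - 1) * P ^ 2 / 2 * (2 * (D - 2) * ((1 + e₁) * (1 + e₃))) := by ring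
        _ ≤ D ^ 2 * (D - 1) * P ^ 2 / 2 * ((2 * D - 3) * (1 + e₂) ^ 2) := hm
        _ = (1 - 1 / (2 * (D - 1))) * (D ^ 2 * (D - 1) ^ 2 * (1 + e₂) ^ 2 * P ^ 2) := by
            field_simp
            ring
    linarith [main]
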